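/- (Candidate completeness, core of Lemma 3.8.) Let X be a weighted string of length n over a finite alphabet Σ, let 1/z ∈ (0,1] be a weight threshold with z ≥ 1, let S = (S_j, π_j)_{j=1}^{⌊z⌋} be a z-estimation of X, and let f be an (ℓ,k)-minimizer scheme. Let P be a pattern of length m with ℓ ≤ m ≤ n and set μ = f(P[1..ℓ]). If P has a z-solid occurrence at position q in X (i.e., P(X[q..q+m−1] = P) ≥ 1/z), then there exists j ∈ [1, ⌊z⌋] such that: (i) P occurs at position q in S_j with q+m−1 ≤ π_j[q]; (ii) f(S_j[q..q+ℓ−1]) = μ, so the position i = q−1+μ is selected as a minimizer for the window of S_j starting at q; and (iii) P[μ..m] is a prefix of S_j[i..π_j[i]] and P[1..μ] equals S_j[q..i]. -/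
import Mathlib


/-- Candidate completeness, core of Lemma 3.8: let `(S j, π j)` be a
`z`-estimation of the weighted string `X` (`z ≥ 1`), and let `f` be an
`(ℓ,k)`-minimizer scheme (0-indexed: `f W ∈ [0, ℓ−k]` is the position of the
leftmost occurrence of the smallest length-`k` substring of the length-`ℓ` window,
w.r.t. a fixed total order on `Σ^k` given by an injective rank function `rk`; `f`
depends only on the first `ℓ` letters). Let `P` be a pattern of length `m` with
`ℓ ≤ m ≤ n` and set `μ = f P`. If `P` has a `z`-solid occurrence at position `q`
in `X`, then some `j` satisfies: (i) `P` occurs at `q` in `S j` respecting `π j`;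
(ii) the minimizer of the window of `S j` starting at `q` is also `μ` (so position
`i = q + μ` is selected); (iii) `P[μ..m-1]` is a prefix of `S j[i..π j i]` and
`P[0..μ]` equals `S j[q..i]`. -/
theorem minimizer_candidate_completeness {A : Type*} [Fintype A] [DecidableEq A]
    (n : ℕ) (X : ℕ → A → ℝ)
    (hX0 : ∀ i < n, ∀ a, 0 ≤ X i a)
    (hX1 : ∀ i < n, ∑ a, X i a = 1)
    (z : ℝ) (hz : 1 ≤ z)
    (S : Fin ⌊z⌋₊ → ℕ → A) (π : Fin ⌊z⌋₊ → ℕ → ℕ)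
    (hπ : ∀ j, ∀ i < n, i ≤ π j i ∧ π j i ≤ n)
    (hπmono : ∀ j, ∀ i i' : ℕ, i ≤ i' → i' < n → π j i ≤ π j i')
    (hest : ∀ (m : ℕ) (P : ℕ → A) (i : ℕ), i + m ≤ n →
      (Finset.univ.filter (fun j : Fin ⌊z⌋₊ =>
          (∀ h < m, S j (i + h) = P h) ∧ i + m ≤ π j i)).card =
        ⌊(∏ h ∈ Finset.range m, X (i + h) (P h)) * z⌋₊)
    (ℓ k : ℕ) (hk : 1 ≤ k) (hkl : k ≤ ℓ)
    (f : (ℕ → A) → ℕ) (rk : (Fin k → A) → ℕ) (hrk : Function.Injective rk)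
    (hfrange : ∀ W : ℕ → A, f W ≤ ℓ - k)
    (hfext : ∀ W W' : ℕ → A, (∀ h < ℓ, W h = W' h) → f W = f W')
    (hfmin : ∀ W : ℕ → A,
      (∀ p ≤ ℓ - k, rk (fun d : Fin k => W (f W + d.val)) ≤
        rk (fun d : Fin k => W (p + d.val))) ∧
      (∀ p < f W, rk (fun d : Fin k => W (p + d.val)) ≠
        rk (fun d : Fin k => W (f W + d.val))))
    (m : ℕ) (P : ℕ → A) (hlm : ℓ ≤ m) (hmn : m ≤ n)
    (q : ℕ) (hqm : q + m ≤ n)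
    (hsolid : 1 / z ≤ ∏ h ∈ Finset.range m, X (q + h) (P h)) :
    ∃ j : Fin ⌊z⌋₊,
      ((∀ h < m, S j (q + h) = P h) ∧ q + m ≤ π j q) ∧
      f (fun h => S j (q + h)) = f P ∧
      ((∀ d < m - f P, S j (q + f P + d) = P (f P + d)) ∧
        (q + f P) + (m - f P) ≤ π j (q + f P)) ∧
      (∀ d ≤ f P, S j (q + d) = P d) :=   by
  have hz0 : (0:ℝ) < z := lt_of_lt_of_le one_pos hz
  have hcard := hest m P q hqm
  have h1 : (1:ℝ) ≤ (∏ h ∈ Finset.range m, X (q + h) (P h)) * z := by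
    have := mul_le_mul_of_nonneg_right hsolid (le_of_lt hz0)
    rwa [one_div, inv_mul_cancel₀ (ne_of_gt hz0)] at this
  have hpos : 0 < (Finset.univ.filter (fun j : Fin ⌊z⌋₊ =>
      (∀ h < m, S j (q + h) = P h) ∧ q + m ≤ π j q)).card := by
    rw [hcard]
    exact Nat.le_floor (by exact_mod_cast h1)
  obtain ⟨j, hj⟩ := Finset.card_pos.mp hpos
  have hj' := (Finset.mem_filter.mp hj).2
  obtain ⟨hocc, hresp⟩ := hj'
  refine ⟨j, ⟨hocc, hresp⟩, ?_, ⟨?_, ?_⟩, ?_⟩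
  · exact hfext _ _ (fun h hh => hocc h (lt_of_lt_of_le hh hlm))
  · intro d hd
    have : f P + d < m := by omega
    have := hocc (f P + d) this
    rwa [← Nat.add_assoc] at this
  · have hfP : f P < m := by
      have := hfrange P; omega
    have h1 : q + f P < n := by omega
    have h2 := hπmono j q (q + f P) (Nat.le_add_right _ _) h1
    have h3 : (q + f P) + (m - f P) = q + m := by omega
    omega
  · intro d hd
    exact hocc d (by have := hfrange P; omega)
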